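/- For θ ∈ ℝ let O(θ) be the real rotation matrix [[cos(θ/2), −sin(θ/2)], [sin(θ/2), cos(θ/2)]], and for s ∈ [0,1] let ρ(s,θ) := O(θ) * diag(s, 1−s) * O(θ)ᵀ, regarded as a 2×2 complex matrix; then ρ(s,θ) ∈ Ω_2. For every s ∈ [0,1] and every θ with 0 ≤ θ < 2π, the quantum optimal transport cost between the isospectral qubits ρ(s,0) and ρ(s,θ) equals T_{C^Q}(ρ(s,0), ρ(s,θ)) = (1/2 − √(s·(1−s))) · sin²(θ/2). -/

import Mathlib

open Matrix ComplexOrder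

/-- A density matrix: positive semidefinite with trace one. -/
def IsDensityMatrix {k : Type*} [Fintype k] [DecidableEq k] (ρ : Matrix k k ℂ) : Prop :=
  ρ.PosSemidef ∧ ρ.trace = 1

/-- Partial trace over the second factor. -/
noncomputable def trB {m n : ℕ} (R : Matrix (Fin m × Fin n) (Fin m × Fin n) ℂ) :
    Matrix (Fin m) (Fin m) ℂ :=
  Matrix.of fun i j => ∑ p, R (i, p) (j, p)

/-- Partial trace over the first factor. -/
noncomputable def trA {m n : ℕ} (R : Matrix (Fin m × Fin n) (Fin m × Fin n) ℂ) :
    Matrix (Fin n) (Fin n) ℂ :=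
  Matrix.of fun p q => ∑ i, R (i, p) (i, q)

/-- The set of quantum couplings of two density matrices. -/
def QCouplings {m n : ℕ} (ρA : Matrix (Fin m) (Fin m) ℂ) (ρB : Matrix (Fin n) (Fin n) ℂ) :
    Set (Matrix (Fin m × Fin n) (Fin m × Fin n) ℂ) :=
  {R | IsDensityMatrix R ∧ trB R = ρA ∧ trA R = ρB}

/-- The quantum optimal transport cost. -/
noncomputable def QOT {m n : ℕ} (C : Matrix (Fin m × Fin n) (Fin m × Fin n) ℂ)
    (ρA : Matrix (Fin m) (Fin m) ℂ) (ρB : Matrix (Fin n) (Fin n) ℂ) : ℝ :=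
  sInf ((fun R => ((C * R).trace).re) '' QCouplings ρA ρB)

/-- The SWAP matrix on `Fin n × Fin n`. -/
noncomputable def swapM (n : ℕ) : Matrix (Fin n × Fin n) (Fin n × Fin n) ℂ :=
  Matrix.of fun x y => if x.1 = y.2 ∧ x.2 = y.1 then 1 else 0

/-- The quantum cost matrix `C^Q = (1/2) (I - S)`. -/
noncomputable def CQ (n : ℕ) : Matrix (Fin n × Fin n) (Fin n × Fin n) ℂ :=
  (1 / 2 : ℂ) • (1 - swapM n)

/-- Kronecker product of square matrices indexed by `Fin m` and `Fin n`. -/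
noncomputable def kron {m n : ℕ} (A : Matrix (Fin m) (Fin m) ℂ)
    (B : Matrix (Fin n) (Fin n) ℂ) : Matrix (Fin m × Fin n) (Fin m × Fin n) ℂ :=
  Matrix.of fun x y => A x.1 y.1 * B x.2 y.2

/-- The rotation matrix `O(θ)`. -/
noncomputable def rotM (θ : ℝ) : Matrix (Fin 2) (Fin 2) ℝ :=
  !![Real.cos (θ / 2), -Real.sin (θ / 2); Real.sin (θ / 2), Real.cos (θ / 2)]

/-- The qubit state `ρ(s,θ) = O(θ) diag(s, 1-s) O(θ)ᵀ`, as a complex matrix. -/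
noncomputable def rhoST (s θ : ℝ) : Matrix (Fin 2) (Fin 2) ℂ :=
  (rotM θ * Matrix.diagonal ![s, 1 - s] * (rotM θ)ᵀ).map (fun x => (x : ℂ))

section AuxQOT

/-- Auxiliary: rank-one "outer product" matrix of a real vector, as a complex matrix. -/
noncomputable def outerC (f : Fin 2 × Fin 2 → ℝ) : Matrix (Fin 2 × Fin 2) (Fin 2 × Fin 2) ℂ :=
  Matrix.of fun x y => ((f x : ℂ)) * ((f y : ℂ))

lemma outerC_posSemidef (f : Fin 2 × Fin 2 → ℝ) : (outerC f).PosSemidef := by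
  have h : outerC f =
      (Matrix.of fun (_ : Fin 1) x => ((f x : ℝ) : ℂ))ᴴ *
        (Matrix.of fun (_ : Fin 1) x => ((f x : ℝ) : ℂ)) := by
    ext x y
    simp [outerC, Matrix.mul_apply, Matrix.conjTranspose_apply, Fin.sum_univ_one,
      Complex.conj_ofReal]
  rw [h]
  exact Matrix.posSemidef_conjTranspose_mul_self _

lemma outerC_trace_re_nonneg (f : Fin 2 × Fin 2 → ℝ)
    {R : Matrix (Fin 2 × Fin 2) (Fin 2 × Fin 2) ℂ} (hR : R.PosSemidef) :
    0 ≤ ((outerC f * R).trace).re := by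
  have h := hR.dotProduct_mulVec_nonneg (fun x => ((f x : ℝ) : ℂ))
  have e : (outerC f * R).trace
      = dotProduct (star (fun x => ((f x : ℝ) : ℂ))) (R *ᵥ (fun x => ((f x : ℝ) : ℂ))) := by
    simp only [outerC, Matrix.trace, Matrix.diag, Matrix.mul_apply, Matrix.of_apply,
      dotProduct, Matrix.mulVec, Pi.star_apply, Complex.star_def, Complex.conj_ofReal,
      Fintype.sum_prod_type, Fin.sum_univ_two, Finset.mul_sum, Finset.sum_mul]
    ring
  rw [e]
  simpa using (Complex.le_def.mp h).1

/-- The main algebraic identity (sum-of-squares duality certificate). -/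
lemma key_scalar (a b c t : ℂ)
    (r00 r01 r02 r03 r10 r11 r12 r13 r20 r21 r22 r23 r30 r31 r32 r33 : ℂ)
    (hab : a^2 + b^2 = 1) (hct : c^2 + t^2 = 1)
    (eA00 : r00 + r11 = a^2) (eA01 : r02 + r13 = 0)
    (eA10 : r20 + r31 = 0) (eA11 : r22 + r33 = b^2)
    (eB00 : r00 + r22 = a^2*c^2 + b^2*t^2) (eB01 : r01 + r23 = (a^2-b^2)*(c*t))
    (eB10 : r10 + r32 = (a^2-b^2)*(c*t)) (eB11 : r11 + r33 = a^2*t^2 + b^2*c^2) :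
    2*a*b*(a+b)^2 * ((r11 + r22 - r12 - r21)/2)
      = (t^2*(a-b)^2) * (1*b^2*r00 + 1*a*b*r30 + 1*a*b*r03 + 1*a^2*r33)
        + (t^2*(a+b)^2) * (1*b^2*r11 - 1*a*b*r21 - 1*a*b*r12 + 1*a^2*r22)
        + (a*b) * (1*b^2*t^2*r33 - 1*b^2*t^2*r30 - 1*b^2*t^2*r03 + 1*b^2*t^2*r00 + 1*b^2*c*t*r32 - 1*b^2*c*t*r31 + 1*b^2*c*t*r23 - 1*b^2*c*t*r20 - 1*b^2*c*t*r13 + 1*b^2*c*t*r10 - 1*b^2*c*t*r02 + 1*b^2*c*t*r01 + 1*b^2*c^2*r22 - 1*b^2*c^2*r21 - 1*b^2*c^2*r12 + 1*b^2*c^2*r11 - 2*a*b*t^2*r33 + 2*a*b*t^2*r30 + 2*a*b*t^2*r03 - 2*a*b*t^2*r00 + 2*a*b*c^2*r22 - 2*a*b*c^2*r21 - 2*a*b*c^2*r12 + 2*a*b*c^2*r11 + 1*a^2*t^2*r33 - 1*a^2*t^2*r30 - 1*a^2*t^2*r03 + 1*a^2*t^2*r00 - 1*a^2*c*t*r32 +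 1*a^2*c*t*r31 - 1*a^2*c*t*r23 + 1*a^2*c*t*r20 + 1*a^2*c*t*r13 - 1*a^2*c*t*r10 + 1*a^2*c*t*r02 - 1*a^2*c*t*r01 + 1*a^2*c^2*r22 - 1*a^2*c^2*r21 - 1*a^2*c^2*r12 + 1*a^2*c^2*r11)
        + 2*a*b*(a+b)^2 * ((1/2 - a*b)*t^2) := by
    linear_combination (-1*b^4*t^2 + 1*a*b^3*t^2 + 1*a^2*b^2*t^2 - 1*a^3*b*t^2) * eA00
      + (1*a*b^3*c*t - 1*a^3*b*c*t) * eA01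
      + (1*a*b^3*c*t - 1*a^3*b*c*t) * eA10
      + (1*a*b^3*t^2 + 1*a^2*b^2*t^2 - 1*a^3*b*t^2 - 1*a^4*t^2) * eA11
      + (-1*a*b^3*c*t + 1*a^3*b*c*t) * eB01
      + (-1*a*b^3*c*t + 1*a^3*b*c*t) * eB10
      + (-2*a*b^3*t^2 + 2*a^3*b*t^2) * eB11
      + (1*a*b*r22 - 1*a*b*r21 - 1*a*b*r12 + 1*a*b*r11 - 1*a*b*t^2*r22 + 1*a*b*t^2*r21 + 1*a*b*t^2*r12 - 1*a*b*t^2*r11 - 1*a*b*c^2*r22 + 1*a*b*c^2*r21 + 1*a*b*c^2*r12 - 1*a*b*c^2*r11 + 1*a*b^3*t^2 + 2*a^2*r22 - 2*a^2*r21 - 2*a^2*r12 + 2*a^2*r11 - 2*a^2*t^2*r22 + 2*a^2*t^2*r21 + 2*a^2*t^2*r12 - 2*a^2*t^2*r11 - 2*a^2*c^2*r22 + 2*a^2*c^2*r21 + 2*a^2*c^2*r12 - 2*a^2*c^2*r11 + 2*a^2*b^2*t^2 + 3*a^3*b*t^2 - 2*a^3*b*t^4 - 2*a^3*b*c^2*t^2)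 * hab
      + (-1*a*b*r22 + 1*a*b*r21 + 1*a*b*r12 - 1*a*b*r11 - 2*a^2*r22 + 2*a^2*r21 + 2*a^2*r12 - 2*a^2*r11 - 2*a^3*b*t^2 + 2*a^4*r22 - 2*a^4*r21 - 2*a^4*r12 + 2*a^4*r11 + 4*a^5*b*t^2) * hct

/-- The marginal `diag(a², b²)` as an explicit complex matrix. -/
noncomputable def rhoAM (a b : ℝ) : Matrix (Fin 2) (Fin 2) ℂ :=
  !![((a^2 : ℝ) : ℂ), 0; 0, ((b^2 : ℝ) : ℂ)]

/-- The rotated marginal as an explicit complex matrix. -/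
noncomputable def rhoBM (a b c t : ℝ) : Matrix (Fin 2) (Fin 2) ℂ :=
  !![((a^2*c^2 + b^2*t^2 : ℝ) : ℂ), (((a^2-b^2)*(c*t) : ℝ) : ℂ);
     (((a^2-b^2)*(c*t) : ℝ) : ℂ), ((a^2*t^2 + b^2*c^2 : ℝ) : ℂ)]

lemma density_general (a b c t : ℝ) (hab : a^2 + b^2 = 1) (hct : c^2 + t^2 = 1) :
    IsDensityMatrix (rhoBM a b c t) := by
  have habC : (a:ℂ)^2 + (b:ℂ)^2 = 1 := by exact_mod_cast hab
  have hctC : (c:ℂ)^2 + (t:ℂ)^2 = 1 := by exact_mod_cast hct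
  constructor
  · have h : rhoBM a b c t =
        (!![((a*c : ℝ):ℂ), ((a*t : ℝ):ℂ); ((-(b*t) : ℝ):ℂ), ((b*c : ℝ):ℂ)])ᴴ *
        (!![((a*c : ℝ):ℂ), ((a*t : ℝ):ℂ); ((-(b*t) : ℝ):ℂ), ((b*c : ℝ):ℂ)]) := by
      ext i j
      fin_cases i <;> fin_cases j <;>
        (simp [rhoBM, Matrix.mul_apply, Matrix.conjTranspose_apply, Fin.sum_univ_two,
          Complex.conj_ofReal] <;> push_cast <;> ring)
    rw [h]
    exact Matrix.posSemidef_conjTranspose_mul_self _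
  · simp only [rhoBM, Matrix.trace_fin_two]
    simp
    push_cast
    linear_combination ((a:ℂ)^2 + (b:ℂ)^2) * hctC + habC

set_option maxHeartbeats 2000000 in
lemma qot_general (a b c t : ℝ) (hab : a^2 + b^2 = 1) (hct : c^2 + t^2 = 1)
    (ha0 : 0 ≤ a) (hb0 : 0 ≤ b) :
    QOT (CQ 2) (rhoAM a b) (rhoBM a b c t) = (1/2 - a*b) * t^2 := by
  have habC : (a:ℂ)^2 + (b:ℂ)^2 = 1 := by exact_mod_cast hab
  have hctC : (c:ℂ)^2 + (t:ℂ)^2 = 1 := by exact_mod_cast hct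
  set Rs := outerC (fun x => !![a*c, a*t; b*t, -(b*c)] x.1 x.2) with hRsdef
  have hmem : Rs ∈ QCouplings (rhoAM a b) (rhoBM a b c t) := by
    refine ⟨⟨outerC_posSemidef _, ?_⟩, ?_, ?_⟩
    · simp only [hRsdef, outerC, Matrix.trace, Matrix.diag, Matrix.of_apply,
        Fintype.sum_prod_type, Fin.sum_univ_two]
      simp
      push_cast
      linear_combination ((a:ℂ)^2 + (b:ℂ)^2) * hctC + habC
    · ext i j
      fin_cases i <;> fin_cases j
      · simp [hRsdef, outerC, trB, Fin.sum_univ_two, rhoAM]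
        push_cast
        linear_combination (a:ℂ)^2 * hctC
      · simp [hRsdef, outerC, trB, Fin.sum_univ_two, rhoAM]
        push_cast
        ring
      · simp [hRsdef, outerC, trB, Fin.sum_univ_two, rhoAM]
        push_cast
        ring
      · simp [hRsdef, outerC, trB, Fin.sum_univ_two, rhoAM]
        push_cast
        linear_combination (b:ℂ)^2 * hctC
    · ext i j
      fin_cases i <;> fin_cases j <;>
        (simp [hRsdef, outerC, trA, Fin.sum_univ_two, rhoBM] <;> push_cast <;> ring)
  have hcost : ((CQ 2 * Rs).trace).re = (1/2 - a*b) * t^2 := by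
    have h : (CQ 2 * Rs).trace = (((1/2 - a*b) * t^2 : ℝ) : ℂ) := by
      simp [hRsdef, outerC, CQ, swapM, Matrix.trace, Matrix.diag, Matrix.mul_apply,
        Matrix.sub_apply, Matrix.smul_apply, Matrix.one_apply, Fintype.sum_prod_type,
        Fin.sum_univ_two, smul_eq_mul, Prod.ext_iff]
      push_cast
      linear_combination ((t:ℂ)^2/2) * habC
    rw [h, Complex.ofReal_re]
  have hlb : ∀ y ∈ (fun R => ((CQ 2 * R).trace).re) '' QCouplings (rhoAM a b) (rhoBM a b c t),
      (1/2 - a*b) * t^2 ≤ y := by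
    rintro y ⟨R, ⟨⟨hRpsd, _⟩, hRA, hRB⟩, rfl⟩
    show (1/2 - a*b) * t^2 ≤ ((CQ 2 * R).trace).re
    -- the eight marginal equations
    have eA00 : R (0,0) (0,0) + R (0,1) (0,1) = ((a:ℂ))^2 := by
      have h := congrFun (congrFun hRA 0) 0
      simp [trB, Fin.sum_univ_two, rhoAM] at h
      push_cast at h ⊢
      linear_combination h
    have eA01 : R (0,0) (1,0) + R (0,1) (1,1) = 0 := by
      have h := congrFun (congrFun hRA 0) 1
      simp [trB, Fin.sum_univ_two, rhoAM] at h
      push_cast at h ⊢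
      linear_combination h
    have eA10 : R (1,0) (0,0) + R (1,1) (0,1) = 0 := by
      have h := congrFun (congrFun hRA 1) 0
      simp [trB, Fin.sum_univ_two, rhoAM] at h
      push_cast at h ⊢
      linear_combination h
    have eA11 : R (1,0) (1,0) + R (1,1) (1,1) = ((b:ℂ))^2 := by
      have h := congrFun (congrFun hRA 1) 1
      simp [trB, Fin.sum_univ_two, rhoAM] at h
      push_cast at h ⊢
      linear_combination h
    have eB00 : R (0,0) (0,0) + R (1,0) (1,0) = ((a:ℂ))^2*((c:ℂ))^2 + ((b:ℂ))^2*((t:ℂ))^2 := by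
      have h := congrFun (congrFun hRB 0) 0
      simp [trA, Fin.sum_univ_two, rhoBM] at h
      push_cast at h ⊢
      linear_combination h
    have eB01 : R (0,0) (0,1) + R (1,0) (1,1) = (((a:ℂ))^2-((b:ℂ))^2)*(((c:ℂ))*((t:ℂ))) := by
      have h := congrFun (congrFun hRB 0) 1
      simp [trA, Fin.sum_univ_two, rhoBM] at h
      push_cast at h ⊢
      linear_combination h
    have eB10 : R (0,1) (0,0) + R (1,1) (1,0) = (((a:ℂ))^2-((b:ℂ))^2)*(((c:ℂ))*((t:ℂ))) := by
      have h := congrFun (congrFun hRB 1) 0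
      simp [trA, Fin.sum_univ_two, rhoBM] at h
      push_cast at h ⊢
      linear_combination h
    have eB11 : R (0,1) (0,1) + R (1,1) (1,1) = ((a:ℂ))^2*((t:ℂ))^2 + ((b:ℂ))^2*((c:ℂ))^2 := by
      have h := congrFun (congrFun hRB 1) 1
      simp [trA, Fin.sum_univ_two, rhoBM] at h
      push_cast at h ⊢
      linear_combination h
    have hT : (CQ 2 * R).trace
        = (R (0,1) (0,1) + R (1,0) (1,0) - R (0,1) (1,0) - R (1,0) (0,1))/2 := by
      simp [CQ, swapM, Matrix.trace, Matrix.diag, Matrix.mul_apply, Matrix.sub_apply,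
        Matrix.smul_apply, Matrix.one_apply, Fintype.sum_prod_type, Fin.sum_univ_two,
        smul_eq_mul, Prod.ext_iff]
      ring
    by_cases haz : a = 0
    · -- pure state case `a = 0`
      subst haz
      obtain ⟨B, hBf⟩ : ∃ B : Matrix (Fin 2 × Fin 2) (Fin 2 × Fin 2) ℂ, R = Bᴴ * B := by
        open scoped MatrixOrder in
        exact CStarAlgebra.nonneg_iff_eq_star_mul_self.mp hRpsd.nonneg
      have hRdiag : ∀ x, R x x = ((∑ k, Complex.normSq (B k x) : ℝ) : ℂ) := by
        intro x
        rw [hBf]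
        simp [Matrix.mul_apply, Matrix.conjTranspose_apply, ← Complex.normSq_eq_conj_mul_self]
      have h0 : (∑ k, Complex.normSq (B k (0,0))) + (∑ k, Complex.normSq (B k (0,1))) = 0 := by
        have h := eA00
        rw [hRdiag, hRdiag] at h
        norm_num at h
        exact_mod_cast h
      have hs1 : (∑ k, Complex.normSq (B k (0,0))) = 0 := by
        have h1 : 0 ≤ ∑ k, Complex.normSq (B k (0,0)) :=
          Finset.sum_nonneg fun k _ => Complex.normSq_nonneg _
        have h2 : 0 ≤ ∑ k, Complex.normSq (B k (0,1)) :=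
          Finset.sum_nonneg fun k _ => Complex.normSq_nonneg _
        linarith
      have hs2 : (∑ k, Complex.normSq (B k (0,1))) = 0 := by
        have h1 : 0 ≤ ∑ k, Complex.normSq (B k (0,0)) :=
          Finset.sum_nonneg fun k _ => Complex.normSq_nonneg _
        have h2 : 0 ≤ ∑ k, Complex.normSq (B k (0,1)) :=
          Finset.sum_nonneg fun k _ => Complex.normSq_nonneg _
        linarith
      have hcol0 : ∀ k, B k (0,0) = 0 := by
        intro k
        have := (Finset.sum_eq_zero_iff_of_nonneg
          (fun k _ => Complex.normSq_nonneg (B k (0,0)))).mp hs1 k (Finset.mem_univ k)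
        exact Complex.normSq_eq_zero.mp this
      have hcol1 : ∀ k, B k (0,1) = 0 := by
        intro k
        have := (Finset.sum_eq_zero_iff_of_nonneg
          (fun k _ => Complex.normSq_nonneg (B k (0,1)))).mp hs2 k (Finset.mem_univ k)
        exact Complex.normSq_eq_zero.mp this
      have z1 : R (0,1) (0,1) = 0 := by
        rw [hBf]; simp [Matrix.mul_apply, Matrix.conjTranspose_apply, hcol1]
      have z2 : R (0,1) (1,0) = 0 := by
        rw [hBf]; simp [Matrix.mul_apply, Matrix.conjTranspose_apply, hcol1]
      have z3 : R (1,0) (0,1) = 0 := by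
        rw [hBf]; simp [Matrix.mul_apply, Matrix.conjTranspose_apply, hcol1]
      have hcol0z : ∀ k, B k 0 = 0 := fun k => by rw [← Prod.mk_zero_zero]; exact hcol0 k
      have z0 : R (0,0) (0,0) = 0 := by
        rw [hBf]; simp [Matrix.mul_apply, Matrix.conjTranspose_apply, hcol0, hcol0z]
      have hR10 : R (1,0) (1,0) = ((b^2*t^2 : ℝ) : ℂ) := by
        have e := eB00
        push_cast at e ⊢
        linear_combination e - z0
      have htr : (CQ 2 * R).trace = ((b^2*t^2/2 : ℝ) : ℂ) := by
        rw [hT, z1, z2, z3, hR10]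
        push_cast
        ring
      rw [htr, Complex.ofReal_re]
      nlinarith [sq_nonneg t]
    · by_cases hbz : b = 0
      · -- pure state case `b = 0`
        subst hbz
        obtain ⟨B, hBf⟩ : ∃ B : Matrix (Fin 2 × Fin 2) (Fin 2 × Fin 2) ℂ, R = Bᴴ * B := by
          open scoped MatrixOrder in
          exact CStarAlgebra.nonneg_iff_eq_star_mul_self.mp hRpsd.nonneg
        have hRdiag : ∀ x, R x x = ((∑ k, Complex.normSq (B k x) : ℝ) : ℂ) := by
          intro x
          rw [hBf]
          simp [Matrix.mul_apply, Matrix.conjTranspose_apply, ← Complex.normSq_eq_conj_mul_self]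
        have h0 : (∑ k, Complex.normSq (B k (1,0))) + (∑ k, Complex.normSq (B k (1,1))) = 0 := by
          have h := eA11
          rw [hRdiag, hRdiag] at h
          norm_num at h
          exact_mod_cast h
        have h1 : 0 ≤ ∑ k, Complex.normSq (B k (1,0)) :=
          Finset.sum_nonneg fun k _ => Complex.normSq_nonneg _
        have h2 : 0 ≤ ∑ k, Complex.normSq (B k (1,1)) :=
          Finset.sum_nonneg fun k _ => Complex.normSq_nonneg _
        have hcol0 : ∀ k, B k (1,0) = 0 := by
          intro k
          have := (Finset.sum_eq_zero_iff_of_nonneg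
            (fun k _ => Complex.normSq_nonneg (B k (1,0)))).mp (by linarith) k (Finset.mem_univ k)
          exact Complex.normSq_eq_zero.mp this
        have hcol1 : ∀ k, B k (1,1) = 0 := by
          intro k
          have := (Finset.sum_eq_zero_iff_of_nonneg
            (fun k _ => Complex.normSq_nonneg (B k (1,1)))).mp (by linarith) k (Finset.mem_univ k)
          exact Complex.normSq_eq_zero.mp this
        have z1 : R (1,0) (1,0) = 0 := by
          rw [hBf]; simp [Matrix.mul_apply, Matrix.conjTranspose_apply, hcol0]
        have z2 : R (0,1) (1,0) = 0 := by
          rw [hBf]; simp [Matrix.mul_apply, Matrix.conjTranspose_apply, hcol0]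
        have z3 : R (1,0) (0,1) = 0 := by
          rw [hBf]; simp [Matrix.mul_apply, Matrix.conjTranspose_apply, hcol0]
        have hcol1z : ∀ k, B k 1 = 0 := fun k => by rw [← Prod.mk_one_one]; exact hcol1 k
        have z0 : R (1,1) (1,1) = 0 := by
          rw [hBf]; simp [Matrix.mul_apply, Matrix.conjTranspose_apply, hcol1, hcol1z]
        have hR01 : R (0,1) (0,1) = ((a^2*t^2 : ℝ) : ℂ) := by
          have e := eB11
          push_cast at e ⊢
          linear_combination e - z0
        have htr : (CQ 2 * R).trace = ((a^2*t^2/2 : ℝ) : ℂ) := by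
          rw [hT, z1, z2, z3, hR01]
          push_cast
          ring
        rw [htr, Complex.ofReal_re]
        nlinarith [sq_nonneg t]
      · -- generic case `0 < a`, `0 < b`
        have ha : 0 < a := lt_of_le_of_ne ha0 (Ne.symm haz)
        have hb : 0 < b := lt_of_le_of_ne hb0 (Ne.symm hbz)
        have hY1 : (outerC (fun x => !![b, 0; 0, a] x.1 x.2) * R).trace
            = 1*(b:ℂ)^2*R (0,0) (0,0) + 1*(a:ℂ)*(b:ℂ)*R (1,1) (0,0) + 1*(a:ℂ)*(b:ℂ)*R (0,0) (1,1) + 1*(a:ℂ)^2*R (1,1) (1,1) := by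
          simp [outerC, Matrix.trace, Matrix.diag, Matrix.mul_apply,
            Fintype.sum_prod_type, Fin.sum_univ_two]
          ring
        have hY2 : (outerC (fun x => !![0, b; -a, 0] x.1 x.2) * R).trace
            = 1*(b:ℂ)^2*R (0,1) (0,1) - 1*(a:ℂ)*(b:ℂ)*R (1,0) (0,1) - 1*(a:ℂ)*(b:ℂ)*R (0,1) (1,0) + 1*(a:ℂ)^2*R (1,0) (1,0) := by
          simp [outerC, Matrix.trace, Matrix.diag, Matrix.mul_apply,
            Fintype.sum_prod_type, Fin.sum_univ_two]
          push_cast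
          ring
        have hY3 : (outerC (fun x => !![-(t*(a-b)), c*(a+b); -(c*(a+b)), t*(a-b)] x.1 x.2) * R).trace
            = 1*(b:ℂ)^2*(t:ℂ)^2*R (1,1) (1,1) - 1*(b:ℂ)^2*(t:ℂ)^2*R (1,1) (0,0) - 1*(b:ℂ)^2*(t:ℂ)^2*R (0,0) (1,1) + 1*(b:ℂ)^2*(t:ℂ)^2*R (0,0) (0,0) + 1*(b:ℂ)^2*(c:ℂ)*(t:ℂ)*R (1,1) (1,0) - 1*(b:ℂ)^2*(c:ℂ)*(t:ℂ)*R (1,1) (0,1) + 1*(b:ℂ)^2*(c:ℂ)*(t:ℂ)*R (1,0) (1,1) - 1*(b:ℂ)^2*(c:ℂ)*(t:ℂ)*R (1,0) (0,0) - 1*(b:ℂ)^2*(c:ℂ)*(t:ℂ)*R (0,1) (1,1) + 1*(b:ℂ)^2*(c:ℂ)*(t:ℂ)*R (0,1) (0,0) - 1*(b:ℂ)^2*(c:ℂ)*(t:ℂ)*R (0,0) (1,0) + 1*(b:ℂ)^2*(c:ℂ)*(t:ℂ)*R (0,0) (0,1) + 1*(b:ℂ)^2*(c:ℂ)^2*R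 (1,0) (1,0) - 1*(b:ℂ)^2*(c:ℂ)^2*R (1,0) (0,1) - 1*(b:ℂ)^2*(c:ℂ)^2*R (0,1) (1,0) + 1*(b:ℂ)^2*(c:ℂ)^2*R (0,1) (0,1) - 2*(a:ℂ)*(b:ℂ)*(t:ℂ)^2*R (1,1) (1,1) + 2*(a:ℂ)*(b:ℂ)*(t:ℂ)^2*R (1,1) (0,0) + 2*(a:ℂ)*(b:ℂ)*(t:ℂ)^2*R (0,0) (1,1) - 2*(a:ℂ)*(b:ℂ)*(t:ℂ)^2*R (0,0) (0,0) + 2*(a:ℂ)*(b:ℂ)*(c:ℂ)^2*R (1,0) (1,0) - 2*(a:ℂ)*(b:ℂ)*(c:ℂ)^2*R (1,0) (0,1) - 2*(a:ℂ)*(b:ℂ)*(c:ℂ)^2*R (0,1) (1,0) + 2*(a:ℂ)*(b:ℂ)*(c:ℂ)^2*R (0,1) (0,1) + 1*(a:ℂ)^2*(t:ℂ)^2*R (1,1) (1,1) - 1*(a:ℂ)^2*(t:ℂ)^2*R (1,1) (0,0) - 1*(a:ℂ)^2*(t:ℂ)^2*R (0,0) (1,1) + 1*(a:ℂ)^2*(t:ℂ)^2*R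 (0,0) (0,0) - 1*(a:ℂ)^2*(c:ℂ)*(t:ℂ)*R (1,1) (1,0) + 1*(a:ℂ)^2*(c:ℂ)*(t:ℂ)*R (1,1) (0,1) - 1*(a:ℂ)^2*(c:ℂ)*(t:ℂ)*R (1,0) (1,1) + 1*(a:ℂ)^2*(c:ℂ)*(t:ℂ)*R (1,0) (0,0) + 1*(a:ℂ)^2*(c:ℂ)*(t:ℂ)*R (0,1) (1,1) - 1*(a:ℂ)^2*(c:ℂ)*(t:ℂ)*R (0,1) (0,0) + 1*(a:ℂ)^2*(c:ℂ)*(t:ℂ)*R (0,0) (1,0) - 1*(a:ℂ)^2*(c:ℂ)*(t:ℂ)*R (0,0) (0,1) + 1*(a:ℂ)^2*(c:ℂ)^2*R (1,0) (1,0) - 1*(a:ℂ)^2*(c:ℂ)^2*R (1,0) (0,1) - 1*(a:ℂ)^2*(c:ℂ)^2*R (0,1) (1,0) + 1*(a:ℂ)^2*(c:ℂ)^2*R (0,1) (0,1) := by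
          simp [outerC, Matrix.trace, Matrix.diag, Matrix.mul_apply,
            Fintype.sum_prod_type, Fin.sum_univ_two]
          push_cast
          ring
        have key := key_scalar (a:ℂ) (b:ℂ) (c:ℂ) (t:ℂ)
          (R (0,0) (0,0)) (R (0,0) (0,1)) (R (0,0) (1,0)) (R (0,0) (1,1))
          (R (0,1) (0,0)) (R (0,1) (0,1)) (R (0,1) (1,0)) (R (0,1) (1,1))
          (R (1,0) (0,0)) (R (1,0) (0,1)) (R (1,0) (1,0)) (R (1,0) (1,1))
          (R (1,1) (0,0)) (R (1,1) (0,1)) (R (1,1) (1,0)) (R (1,1) (1,1))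
          habC hctC eA00 eA01 eA10 eA11 eB00 eB01 eB10 eB11
        have key2 : ((2*a*b*(a+b)^2 : ℝ) : ℂ) * (CQ 2 * R).trace
            = ((t^2*(a-b)^2 : ℝ) : ℂ) * (outerC (fun x => !![b, 0; 0, a] x.1 x.2) * R).trace
              + ((t^2*(a+b)^2 : ℝ) : ℂ) * (outerC (fun x => !![0, b; -a, 0] x.1 x.2) * R).trace
              + ((a*b : ℝ) : ℂ) * (outerC (fun x => !![-(t*(a-b)), c*(a+b); -(c*(a+b)), t*(a-b)] x.1 x.2) * R).trace
              + ((2*a*b*(a+b)^2 * ((1/2 - a*b)*t^2) : ℝ) : ℂ) := by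
          rw [hT, hY1, hY2, hY3]
          push_cast
          linear_combination key
        have keyre := congrArg Complex.re key2
        simp only [Complex.add_re, Complex.mul_re, Complex.ofReal_re, Complex.ofReal_im,
          zero_mul, sub_zero] at keyre
        have hz1 := outerC_trace_re_nonneg (fun x => !![b, 0; 0, a] x.1 x.2) hRpsd
        have hz2 := outerC_trace_re_nonneg (fun x => !![0, b; -a, 0] x.1 x.2) hRpsd
        have hz3 := outerC_trace_re_nonneg
          (fun x => !![-(t*(a-b)), c*(a+b); -(c*(a+b)), t*(a-b)] x.1 x.2) hRpsd
        have hB1 : (0:ℝ) ≤ t^2*(a-b)^2 := by positivity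
        have hB2 : (0:ℝ) ≤ t^2*(a+b)^2 := by positivity
        have hB3 : (0:ℝ) ≤ a*b := by positivity
        have hd : (0:ℝ) < 2*a*b*(a+b)^2 := by positivity
        have hfin : 2*a*b*(a+b)^2 * ((1/2 - a*b)*t^2) ≤ 2*a*b*(a+b)^2 * ((CQ 2 * R).trace).re := by
          nlinarith [mul_nonneg hB1 hz1, mul_nonneg hB2 hz2, mul_nonneg hB3 hz3]
        exact le_of_mul_le_mul_left hfin hd
  unfold QOT
  refine le_antisymm (csInf_le ⟨_, hlb⟩ ⟨Rs, hmem, hcost⟩)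
    (le_csInf ⟨_, ⟨Rs, hmem, hcost⟩⟩ hlb)

lemma rhoST_eq (s θ : ℝ) : rhoST s θ =
    !![((s * Real.cos (θ/2)^2 + (1-s) * Real.sin (θ/2)^2 : ℝ) : ℂ),
        (((s-(1-s)) * (Real.cos (θ/2) * Real.sin (θ/2)) : ℝ) : ℂ);
       (((s-(1-s)) * (Real.cos (θ/2) * Real.sin (θ/2)) : ℝ) : ℂ),
        ((s * Real.sin (θ/2)^2 + (1-s) * Real.cos (θ/2)^2 : ℝ) : ℂ)] := by
  have hd : Matrix.diagonal ![s, 1-s] = !![s, 0; 0, 1-s] := by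
    ext i j; fin_cases i <;> fin_cases j <;> simp [Matrix.diagonal_apply]
  have htr : (rotM θ)ᵀ = !![Real.cos (θ/2), Real.sin (θ/2); -Real.sin (θ/2), Real.cos (θ/2)] := by
    ext i j; fin_cases i <;> fin_cases j <;> simp [rotM]
  rw [rhoST, hd, htr, rotM, Matrix.mul_fin_two, Matrix.mul_fin_two]
  ext i j
  fin_cases i <;> fin_cases j <;> simp [Matrix.map_apply] <;> ring

lemma rhoST_zero (s : ℝ) : rhoST s 0 = !![((s:ℝ) : ℂ), 0; 0, ((1 - s : ℝ) : ℂ)] := by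
  rw [rhoST_eq]
  norm_num

end AuxQOT

/-- `ρ(s,θ)` is a density matrix and the transport cost between the
isospectral qubits `ρ(s,0)` and `ρ(s,θ)` has a closed form. -/
theorem qot_isospectral_qubits (s θ : ℝ) (hs0 : 0 ≤ s) (hs1 : s ≤ 1)
    (hθ0 : 0 ≤ θ) (hθ1 : θ < 2 * Real.pi) :
    IsDensityMatrix (rhoST s θ) ∧
    QOT (CQ 2) (rhoST s 0) (rhoST s θ) =
      (1 / 2 - Real.sqrt (s * (1 - s))) * Real.sin (θ / 2) ^ 2 := by
  have ha : Real.sqrt s ^ 2 = s := Real.sq_sqrt hs0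
  have hb : Real.sqrt (1-s) ^ 2 = 1 - s := Real.sq_sqrt (by linarith)
  have hab : Real.sqrt s ^ 2 + Real.sqrt (1-s) ^ 2 = 1 := by rw [ha, hb]; ring
  have hct : Real.cos (θ/2)^2 + Real.sin (θ/2)^2 = 1 := by
    rw [add_comm]; exact Real.sin_sq_add_cos_sq _
  have hrB : rhoBM (Real.sqrt s) (Real.sqrt (1-s)) (Real.cos (θ/2)) (Real.sin (θ/2))
      = rhoST s θ := by
    rw [rhoST_eq]
    unfold rhoBM
    rw [ha, hb]
  have hrA : rhoAM (Real.sqrt s) (Real.sqrt (1-s)) = rhoST s 0 := by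
    rw [rhoST_zero]
    unfold rhoAM
    rw [ha, hb]
  constructor
  · rw [← hrB]
    exact density_general _ _ _ _ hab hct
  · rw [← hrA, ← hrB, Real.sqrt_mul hs0]
    exact qot_general _ _ _ _ hab hct (Real.sqrt_nonneg _) (Real.sqrt_nonneg _)
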